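/- For every real u ≠ 0 with u²·W(e) < 1 for all e ∈ EX, the family (⟨(1 − B_ev(u))x, x⟩)_{x∈VX} is absolutely summable and (1/u)·Σ_{x∈VX} ⟨(1 − B_ev(u))x, x⟩ = − Σ_{e∈EX} 2u·W(e)/(1 − u²W(e)), i.e. tr[(1 − B_ev(u))/u] equals the logarithmic derivative Σ_{e∈EX} d/du log(1 − u²W(e)). -/

import Mathlib

/- Formalization of a statement from "Ihara Zeta functions of infinite weighted graphs"
   (A. Deitmar).  Context: `X` is a connected graph of bounded valency, `w` is a positive
   weight function on oriented edges (darts) with finite total weight. -/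

open scoped BigOperators
open SimpleGraph

attribute [local instance 10] Classical.propDecidable
noncomputable local instance (priority := 10) {α : Type*} : DecidableEq α := Classical.decEq _

variable {V : Type*}

/-- The standard basis vector of `ℓ²(ι)` at `i`. -/
noncomputable def bv {ι : Type*} (i : ι) : lp (fun _ : ι => ℂ) 2 := lp.single 2 i 1

/-- For adjacent vertices `x, y`, `dartW G w h = w(x,y)·w(y,x)`, the weight `W(x,y)` of the
underlying edge. -/
noncomputable def dartW (G : SimpleGraph V) (w : G.Dart → ℝ) {x y : V} (h : G.Adj x y) : ℝ :=
  w ⟨(x, y), h⟩ * w ⟨(y, x), h.symm⟩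

/-- The weight `W(e)` of an unoriented edge. -/
noncomputable def Wedge (G : SimpleGraph V) (w : G.Dart → ℝ) : Sym2 V → ℝ :=
  Sym2.lift ⟨fun x y => if h : G.Adj x y then w ⟨(x, y), h⟩ * w ⟨(y, x), h.symm⟩ else 0,
    fun x y => by
      dsimp only
      by_cases h : G.Adj x y
      · rw [dif_pos h, dif_pos h.symm, mul_comm]
      · rw [dif_neg h, dif_neg (fun h' => h h'.symm)]⟩

/-- Darts are in bijection with pairs of a vertex and a neighbor. -/
def dartSigmaEquiv (G : SimpleGraph V) : G.Dart ≃ Σ v : V, G.neighborSet v where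
  toFun d := ⟨d.fst, d.snd, d.adj⟩
  invFun p := ⟨(p.1, p.2.1), p.2.2⟩
  left_inv d := by cases d; rfl
  right_inv p := rfl

/-- For real `u ≠ 0` with `u²W < 1` everywhere, the diagonal of
`1 − B_ev(u)` is absolutely summable and
`(1/u)·tr(1 − B_ev(u)) = −Σ_{e∈EX} 2uW(e)/(1 − u²W(e))`. -/
theorem statement_14 (G : SimpleGraph V) (hconn : G.Connected)
    (M : ℝ) (hM : 0 < M)
    (hval : ∀ x : V, (G.neighborSet x).Finite ∧ ((G.neighborSet x).ncard : ℝ) ≤ M)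
    (w : G.Dart → ℝ) (hw : ∀ e, 0 < w e) (hsum : Summable w)
    (u : ℝ) (hu0 : u ≠ 0)
    (hu : ∀ ⦃x y : V⦄ (h : G.Adj x y), u ^ 2 * dartW G w h < 1)
    (Bev : lp (fun _ : V => ℂ) 2 →L[ℂ] lp (fun _ : V => ℂ) 2)
    (hBev : ∀ x y : V, Bev (bv x) y
      = if y = x then
          ((1 + ∑' x' : G.neighborSet x,
            u ^ 2 * dartW G w x'.2 / (1 - u ^ 2 * dartW G w x'.2) : ℝ) : ℂ)
        else 0) :
    Summable (fun x : V => ‖(1 - Bev) (bv x) x‖) ∧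
    (1 / (u : ℂ)) * ∑' x : V, (1 - Bev) (bv x) x
      = -((∑' e : G.edgeSet,
          2 * u * Wedge G w e.1 / (1 - u ^ 2 * Wedge G w e.1) : ℝ) : ℂ) := by
  classical
  have hu2 : 0 < u ^ 2 := lt_of_le_of_ne (sq_nonneg u) (Ne.symm (pow_ne_zero 2 hu0))
  set g : G.Dart → ℝ := fun d => u ^ 2 * (w d * w d.symm) with hg_def
  set f : G.Dart → ℝ := fun d => g d / (1 - g d) with hf_def
  have hgpos : ∀ d, 0 < g d := fun d => mul_pos hu2 (mul_pos (hw d) (hw d.symm))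
  have hdartW : ∀ d : G.Dart, dartW G w d.adj = w d * w d.symm := by
    rintro ⟨⟨a, b⟩, h⟩; rfl
  have hglt : ∀ d, g d < 1 := by
    intro d
    have h := hu d.adj
    rwa [hdartW d] at h
  have hfnonneg : ∀ d, 0 ≤ f d := fun d => div_nonneg (hgpos d).le (by linarith [hglt d])
  -- summability of g
  have hg_sum : Summable g := by
    refine Summable.of_nonneg_of_le (fun d => (hgpos d).le) (fun d => ?_)
      (hsum.mul_left (u ^ 2 * (∑' d', w d')))
    have hC : w d.symm ≤ ∑' d', w d' := hsum.le_tsum d.symm fun _ _ => (hw _).le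
    calc g d = u ^ 2 * (w d * w d.symm) := rfl
      _ ≤ u ^ 2 * (w d * (∑' d', w d')) := by
          have := (hw d).le
          gcongr
      _ = u ^ 2 * (∑' d', w d') * w d := by ring
  -- the set where g is large is finite
  have hs_fin : {d : G.Dart | ¬ g d < 1/2}.Finite := by
    have hev : ∀ᶠ d in Filter.cofinite, g d < 1/2 :=
      hg_sum.tendsto_cofinite_zero.eventually_lt_const (by norm_num)
    exact Filter.eventually_cofinite.mp hev
  -- summability of f
  have hf_sum : Summable f := by
    rw [← hs_fin.summable_compl_iff]
    refine Summable.of_nonneg_of_le (fun d => hfnonneg d) (fun d => ?_)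
      ((hg_sum.mul_left 2).subtype _)
    obtain ⟨d, hd⟩ := d
    have hd' : g d < 1/2 := by simpa using hd
    show f d ≤ 2 * g d
    rw [hf_def]
    rw [div_le_iff₀ (by linarith)]
    nlinarith [(hgpos d).le]
  -- transport to the sigma type of (vertex, neighbor)
  set E := dartSigmaEquiv G with hE_def
  have hF_sum : Summable (f ∘ E.symm) := E.symm.summable_iff.mpr hf_sum
  set T : V → ℝ := fun x =>
    ∑' x' : G.neighborSet x, u ^ 2 * dartW G w x'.2 / (1 - u ^ 2 * dartW G w x'.2) with hT_def
  have hT : ∀ x : V, T x = ∑' c : G.neighborSet x, (f ∘ E.symm) ⟨x, c⟩ := by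
    intro x
    exact tsum_congr fun c => rfl
  have hT_sum : Summable T := hF_sum.sigma.congr fun x => (hT x).symm
  have hT_tsum : ∑' x, T x = ∑' d, f d := by
    rw [tsum_congr hT, ← hF_sum.tsum_sigma]
    exact E.symm.tsum_eq f
  have hTnonneg : ∀ x, 0 ≤ T x := by
    intro x
    refine tsum_nonneg fun x' => div_nonneg ?_ ?_
    · exact mul_nonneg hu2.le (mul_pos (hw _) (hw _)).le
    · linarith [hu x'.2]
  -- diagonal entries
  have hdiag : ∀ x : V, (1 - Bev) (bv x) x = ((-(T x) : ℝ) : ℂ) := by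
    intro x
    have h1 : (1 - Bev) (bv x) = bv x - Bev (bv x) := by
      simp [ContinuousLinearMap.sub_apply]
    rw [h1, lp.coeFn_sub, Pi.sub_apply, hBev x x, if_pos rfl]
    have h2 : bv x x = 1 := lp.single_apply_self 2 x 1
    rw [h2, Complex.ofReal_add, Complex.ofReal_one, Complex.ofReal_neg]
    ring
  have hnorm : (fun x : V => ‖(1 - Bev) (bv x) x‖) = T := by
    funext x
    rw [hdiag x, Complex.norm_real, norm_neg, Real.norm_of_nonneg (hTnonneg x)]
  refine ⟨by rw [hnorm]; exact hT_sum, ?_⟩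
  -- edge side
  set q : G.Dart → G.edgeSet := fun d => ⟨d.edge, d.edge_mem⟩ with hq_def
  have hfib := hf_sum.hasSum.tsum_fiberwise q
  set FE : G.edgeSet → ℝ := fun e => u ^ 2 * Wedge G w e.1 / (1 - u ^ 2 * Wedge G w e.1)
    with hFE_def
  have hWedge : ∀ (a b : V) (h : G.Adj a b),
      Wedge G w s(a, b) = w (⟨(a, b), h⟩ : G.Dart) * w (⟨(a, b), h⟩ : G.Dart).symm := by
    intro a b h
    simp only [Wedge, Sym2.lift_mk]
    rw [dif_pos h]
    rfl
  have hWlt : ∀ e : G.edgeSet, u ^ 2 * Wedge G w e.1 < 1 := by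
    rintro ⟨e, he⟩
    induction e using Sym2.ind with
    | _ a b =>
      have hab : G.Adj a b := he
      rw [hWedge a b hab]
      exact hglt ⟨(a, b), hab⟩
  have key : ∀ e : G.edgeSet, (∑' d : q ⁻¹' {e}, f d) = 2 * FE e := by
    rintro ⟨e, he⟩
    induction e using Sym2.ind with
    | _ a b =>
      have hab : G.Adj a b := he
      set d₀ : G.Dart := ⟨(a, b), hab⟩ with hd₀
      have hset : q ⁻¹' {⟨s(a, b), he⟩} = {d₀, d₀.symm} := by
        ext d
        simp only [Set.mem_preimage, Set.mem_singleton_iff, Set.mem_insert_iff, hq_def,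
          Subtype.ext_iff]
        show d.edge = s(a, b) ↔ _
        rw [show s(a, b) = d₀.edge from rfl, dart_edge_eq_iff]
      rw [hset]
      have hne : d₀ ≠ d₀.symm := (d₀.symm_ne).symm
      have hcoe : ({d₀, d₀.symm} : Set G.Dart) = (↑({d₀, d₀.symm} : Finset G.Dart) : Set G.Dart) := by
        simp
      rw [hcoe, Finset.tsum_subtype', Finset.sum_pair hne]
      have hsymm : f d₀.symm = f d₀ := by
        simp only [hf_def, hg_def, Dart.symm_symm]
        rw [mul_comm (w d₀.symm) (w d₀)]
      have hfd₀ : f d₀ = FE ⟨s(a, b), he⟩ := by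
        simp only [hf_def, hg_def, hFE_def]
        rw [hWedge a b hab]
      rw [hsymm, hfd₀]
      ring
  have hfib' : HasSum (fun e : G.edgeSet => 2 * FE e) (∑' d, f d) := by
    have : (fun e : G.edgeSet => ∑' d : q ⁻¹' {e}, f d) = fun e => 2 * FE e := funext key
    rwa [this] at hfib
  have hEdge : HasSum (fun e : G.edgeSet => 2 * u * Wedge G w e.1 / (1 - u ^ 2 * Wedge G w e.1))
      ((1 / u) * ∑' d, f d) := by
    have h3 := hfib'.mul_left (1 / u)
    have heq : (fun e : G.edgeSet => (1 / u) * (2 * FE e))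
        = fun e : G.edgeSet => 2 * u * Wedge G w e.1 / (1 - u ^ 2 * Wedge G w e.1) := by
      funext e
      have hD : (0 : ℝ) < 1 - u ^ 2 * Wedge G w e.1 := by linarith [hWlt e]
      rw [hFE_def]
      field_simp [hD.ne']
    rwa [heq] at h3
  have hLHS : ∑' x : V, (1 - Bev) (bv x) x = -((∑' x, T x : ℝ) : ℂ) := by
    rw [tsum_congr hdiag, ← Complex.ofReal_tsum, tsum_neg]
    push_cast
    ring
  rw [hLHS, hT_tsum, hEdge.tsum_eq]
  push_cast
  ring
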